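/- The modular map is a group homomorphism: if E is a quasi-normal subgroup of a group G (i.e., for every g in G, the subgroup E ∩ gEg⁻¹ has finite index in both E and gEg⁻¹), then the map m : G → ℚ₊* defined by m(g) = [E : E ∩ gEg⁻¹] / [gEg⁻¹ : E ∩ gEg⁻¹] satisfies m(gh) = m(g)·m(h) for all g, h in G. -/

import Mathlib

/-- The conjugate subgroup `gEg⁻¹`. -/
def conjSubgroup {G : Type*} [Group G] (g : G) (E : Subgroup G) : Subgroup G :=
  E.map (MulAut.conj g).toMonoidHom

/-- The modular map `m(g) = [E : E ∩ gEg⁻¹] / [gEg⁻¹ : E ∩ gEg⁻¹]` as a rational number,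
where `[K : H ∩ K]` is `Subgroup.relindex H K`. -/
noncomputable def modularMap {G : Type*} [Group G] (E : Subgroup G) (g : G) : ℚ :=
  ((conjSubgroup g E).relIndex E : ℚ) / (E.relIndex (conjSubgroup g E) : ℚ)

lemma conjSubgroup_mul {G : Type*} [Group G] (g h : G) (E : Subgroup G) :
    conjSubgroup (g * h) E = conjSubgroup g (conjSubgroup h E) := by
  simp only [conjSubgroup, Subgroup.map_map]
  congr 1
  ext x
  simp [MulAut.conj_apply, mul_assoc]

lemma relindex_conjSubgroup {G : Type*} [Group G] (g : G) (H K : Subgroup G) :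
    (conjSubgroup g H).relIndex (conjSubgroup g K) = H.relIndex K := by
  have hmap : ∀ L : Subgroup G, conjSubgroup g L
      = L.comap ((MulAut.conj g).symm : G ≃* G).toMonoidHom := by
    intro L
    exact Subgroup.map_equiv_eq_comap_symm' (MulAut.conj g) L
  rw [hmap H, Subgroup.relIndex_comap]
  congr 1
  rw [conjSubgroup, Subgroup.map_map]
  convert Subgroup.map_id K
  ext x
  simp

lemma relindex_cross {G : Type*} [Group G] (A B D : Subgroup G) (h1 : D ≤ A) (h2 : D ≤ B) :
    D.relIndex A * A.relIndex B = D.relIndex B * B.relIndex A := by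
  have e1 : D.relIndex (A ⊓ B) * (A ⊓ B).relIndex A = D.relIndex A :=
    Subgroup.relIndex_mul_relIndex _ _ _ (le_inf h1 h2) inf_le_left
  have e2 : D.relIndex (A ⊓ B) * (A ⊓ B).relIndex B = D.relIndex B :=
    Subgroup.relIndex_mul_relIndex _ _ _ (le_inf h1 h2) inf_le_right
  have f1 : (A ⊓ B).relIndex A = B.relIndex A := Subgroup.inf_relIndex_left A B
  have f2 : (A ⊓ B).relIndex B = A.relIndex B := Subgroup.inf_relIndex_right A B
  rw [← e1, ← e2, f1, f2]
  ring

/-- If `E` is quasi-normal in `G` (every conjugate `gEg⁻¹` is commensurable with `E`),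
then the modular map is multiplicative: `m(gh) = m(g) m(h)`. -/
theorem modularMap_mul {G : Type*} [Group G] (E : Subgroup G)
    (hqn : ∀ g : G, (conjSubgroup g E).relIndex E ≠ 0 ∧ E.relIndex (conjSubgroup g E) ≠ 0)
    (g h : G) :
    modularMap E (g * h) = modularMap E g * modularMap E h := by
  set A := E with hA
  set B := conjSubgroup g E with hB
  set C := conjSubgroup (g * h) E with hC
  have hCg : C = conjSubgroup g (conjSubgroup h E) := conjSubgroup_mul g h E
  -- pairwise nonzero relindexes
  have hBA : B.relIndex A ≠ 0 := (hqn g).1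
  have hAB : A.relIndex B ≠ 0 := (hqn g).2
  have hCA : C.relIndex A ≠ 0 := (hqn (g * h)).1
  have hAC : A.relIndex C ≠ 0 := (hqn (g * h)).2
  have hCB : C.relIndex B ≠ 0 := by
    rw [hCg, hB, relindex_conjSubgroup]; exact (hqn h).1
  have hBC : B.relIndex C ≠ 0 := by
    rw [hCg, hB, relindex_conjSubgroup]; exact (hqn h).2
  -- m(h) in terms of B and C
  have hmh : modularMap E h = (C.relIndex B : ℚ) / (B.relIndex C : ℚ) := by
    rw [modularMap, hCg, hB, relindex_conjSubgroup, relindex_conjSubgroup]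
  set D := A ⊓ (B ⊓ C) with hD
  have hDA : D ≤ A := inf_le_left
  have hDB : D ≤ B := le_trans inf_le_right inf_le_left
  have hDC : D ≤ C := le_trans inf_le_right inf_le_right
  have hnA : D.relIndex A ≠ 0 := by
    apply Subgroup.relIndex_inf_ne_zero
    · simp [Subgroup.relIndex_self]
    · exact Subgroup.relIndex_inf_ne_zero hBA hCA
  have hnB : D.relIndex B ≠ 0 := by
    apply Subgroup.relIndex_inf_ne_zero hAB
    apply Subgroup.relIndex_inf_ne_zero
    · simp [Subgroup.relIndex_self]
    · exact hCB
  have hnC : D.relIndex C ≠ 0 := by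
    apply Subgroup.relIndex_inf_ne_zero hAC
    apply Subgroup.relIndex_inf_ne_zero hBC
    simp [Subgroup.relIndex_self]
  have r1 : (D.relIndex A : ℚ) * (A.relIndex B : ℚ)
      = (D.relIndex B : ℚ) * (B.relIndex A : ℚ) := by
    exact_mod_cast congrArg (Nat.cast (R := ℚ)) (relindex_cross A B D hDA hDB)
  have r2 : (D.relIndex B : ℚ) * (B.relIndex C : ℚ)
      = (D.relIndex C : ℚ) * (C.relIndex B : ℚ) := by
    exact_mod_cast congrArg (Nat.cast (R := ℚ)) (relindex_cross B C D hDB hDC)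
  have r3 : (D.relIndex C : ℚ) * (C.relIndex A : ℚ)
      = (D.relIndex A : ℚ) * (A.relIndex C : ℚ) := by
    exact_mod_cast congrArg (Nat.cast (R := ℚ)) (relindex_cross C A D hDC hDA)
  have hprod : (A.relIndex B : ℚ) * (B.relIndex C : ℚ) * (C.relIndex A : ℚ)
      = (B.relIndex A : ℚ) * (C.relIndex B : ℚ) * (A.relIndex C : ℚ) := by
    have hAq : (D.relIndex A : ℚ) ≠ 0 := Nat.cast_ne_zero.mpr hnA
    have hBq : (D.relIndex B : ℚ) ≠ 0 := Nat.cast_ne_zero.mpr hnB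
    have hCq : (D.relIndex C : ℚ) ≠ 0 := Nat.cast_ne_zero.mpr hnC
    apply mul_left_cancel₀ (mul_ne_zero (mul_ne_zero hAq hBq) hCq)
    linear_combination ((D.relIndex B : ℚ) * (B.relIndex C : ℚ) * (D.relIndex C : ℚ)
        * (C.relIndex A : ℚ)) * r1
      + ((D.relIndex B : ℚ) * (B.relIndex A : ℚ) * (D.relIndex C : ℚ)
        * (C.relIndex A : ℚ)) * r2
      + ((D.relIndex B : ℚ) * (B.relIndex A : ℚ) * (D.relIndex C : ℚ)
        * (C.relIndex B : ℚ)) * r3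
  rw [hmh]
  show (C.relIndex A : ℚ) / (A.relIndex C : ℚ)
      = (B.relIndex A : ℚ) / (A.relIndex B : ℚ) * ((C.relIndex B : ℚ) / (B.relIndex C : ℚ))
  have hABq : (A.relIndex B : ℚ) ≠ 0 := Nat.cast_ne_zero.mpr hAB
  have hACq : (A.relIndex C : ℚ) ≠ 0 := Nat.cast_ne_zero.mpr hAC
  have hBCq : (B.relIndex C : ℚ) ≠ 0 := Nat.cast_ne_zero.mpr hBC
  field_simp
  linear_combination hprod
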